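/- Let M be an n-dimensional complete noncompact Riemannian manifold with nonnegative Ricci curvature. Then for every p ∈ M and every d > 0, ∫_{B_p(d)} d(p,x) dvol > c(n) · d · Vol(B_p(d)), where c(n) = 3/(2√(n²+n+1) + 2n + 1) · (n/(n + 2 + 2√(n²+n+1)))^n. -/

import Mathlib

open MeasureTheory Metric

/-- Theorem 4.2: Let `M` be an `n`-dimensional complete noncompact
Riemannian manifold with `Ric ≥ 0`.  The curvature hypothesis is encoded (Mathlib
has no Riemannian curvature) by the Euclidean Bishop–Gromov monotonicity of
`r ↦ μ(B_q(r))/r^n`; noncompactness and completeness supply, for every `p` and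
`s ≥ 0`, a point at distance exactly `s` from `p` (hypothesis `hray`).  Then for
every `p` and every `d > 0`,
`∫_{B_p(d)} d(p,x) dvol > c(n) · d · Vol(B_p(d))` with
`c(n) = 3/(2√(n²+n+1)+2n+1) · (n/(n+2+2√(n²+n+1)))^n`. -/
theorem integral_dist_ball_gt_of_nonneg_ricci_noncompact
    {M : Type*} [MetricSpace M] [CompleteSpace M] [NoncompactSpace M]
    [MeasurableSpace M] [OpensMeasurableSpace M]
    (μ : Measure M) (n : ℕ) (hn : 1 ≤ n)
    (hBG : ∀ (q : M) (r s : ℝ), 0 < r → r ≤ s →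
      μ (Metric.ball q s) * ENNReal.ofReal (r ^ n) ≤
        μ (Metric.ball q r) * ENNReal.ofReal (s ^ n))
    (hray : ∀ (p : M) (s : ℝ), 0 ≤ s → ∃ q : M, dist p q = s)
    (hpos : ∀ (q : M) (s : ℝ), 0 < s → 0 < μ (Metric.ball q s))
    (hfin : ∀ (q : M) (s : ℝ), μ (Metric.ball q s) < ⊤)
    (p : M) (d : ℝ) (hd : 0 < d) :
    3 / (2 * Real.sqrt ((n : ℝ) ^ 2 + n + 1) + 2 * n + 1) *
        ((n : ℝ) / (n + 2 + 2 * Real.sqrt ((n : ℝ) ^ 2 + n + 1))) ^ n *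
        d * (μ (Metric.ball p d)).toReal <
      ∫ x in Metric.ball p d, dist p x ∂μ := by
  have hn1 : (1:ℝ) ≤ (n:ℝ) := by exact_mod_cast hn
  set s : ℝ := Real.sqrt ((n : ℝ) ^ 2 + n + 1) with hsdef
  have hs2 : s ^ 2 = (n:ℝ)^2 + n + 1 := Real.sq_sqrt (by positivity)
  have hs0 : 0 ≤ s := Real.sqrt_nonneg _
  have hslb : (n:ℝ) + 1/2 < s := by nlinarith
  have hsub : s < (n:ℝ) + 1 := by nlinarith
  set α : ℝ := (n:ℝ) + 1 - s with hαdef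
  have hα0 : 0 < α := by simp only [hαdef]; linarith
  have hα2 : α < 1/2 := by simp only [hαdef]; linarith
  set t : ℝ := α * d with htdef
  have ht0 : 0 < t := mul_pos hα0 hd
  have htd : 2 * t < d := by
    simp only [htdef]; nlinarith
  obtain ⟨q, hq⟩ := hray p (d - t) (by linarith)
  -- inclusions
  have hsub1 : ball q t ⊆ ball p d := by
    intro x hx
    rw [mem_ball'] at hx ⊢
    calc dist p x ≤ dist p q + dist q x := dist_triangle _ _ _
      _ < (d - t) + t := by rw [hq]; linarith
      _ = d := by ring
  have hsub2 : ball p d ⊆ ball q (2 * d - t) := by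
    intro x hx
    rw [mem_ball'] at hx ⊢
    calc dist q x ≤ dist q p + dist p x := dist_triangle _ _ _
      _ < (d - t) + d := by rw [dist_comm, hq]; linarith
      _ = 2 * d - t := by ring
  -- measures
  set A : ℝ := (μ (ball q t)).toReal with hAdef
  set B : ℝ := (μ (ball p d)).toReal with hBdef
  have hA0 : 0 < A := ENNReal.toReal_pos (hpos q t ht0).ne' (hfin q t).ne
  have hB0 : 0 ≤ B := ENNReal.toReal_nonneg
  -- Bishop-Gromov in real form : B * t^n ≤ A * (2d-t)^n
  have hkey : B * t ^ n ≤ A * (2 * d - t) ^ n := by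
    have h1 : μ (ball p d) * ENNReal.ofReal (t ^ n) ≤
        μ (ball q t) * ENNReal.ofReal ((2 * d - t) ^ n) := by
      refine le_trans ?_ (hBG q t (2 * d - t) ht0 (by linarith))
      exact mul_le_mul_left (measure_mono hsub2) _
    have h2 := ENNReal.toReal_mono (by
        exact ENNReal.mul_ne_top (hfin q t).ne ENNReal.ofReal_ne_top) h1
    rw [ENNReal.toReal_mul, ENNReal.toReal_mul, ENNReal.toReal_ofReal (pow_nonneg ht0.le n),
      ENNReal.toReal_ofReal (pow_nonneg (by linarith) n)] at h2
    exact h2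
  -- integrability
  have hmble : AEStronglyMeasurable (fun x => dist p x) μ :=
    (continuous_const.dist continuous_id).aestronglyMeasurable
  have hint : IntegrableOn (fun x => dist p x) (ball p d) μ := by
    refine Measure.integrableOn_of_bounded (hfin p d).ne hmble (M := d) ?_
    filter_upwards [ae_restrict_mem measurableSet_ball] with x hx
    rw [Real.norm_eq_abs, abs_of_nonneg dist_nonneg]
    rw [mem_ball'] at hx; exact hx.le
  have hintq : IntegrableOn (fun x => dist p x) (ball q t) μ := hint.mono_set hsub1
  have hintq2 : IntegrableOn (fun x => dist q x) (ball q t) μ := by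
    refine Measure.integrableOn_of_bounded (hfin q t).ne
      (continuous_const.dist continuous_id).aestronglyMeasurable (M := t) ?_
    filter_upwards [ae_restrict_mem measurableSet_ball] with x hx
    rw [Real.norm_eq_abs, abs_of_nonneg dist_nonneg]
    rw [mem_ball'] at hx; exact hx.le
  -- step 1 : ∫_{B_p d} ≥ ∫_{B_q t}
  have step1 : ∫ x in ball q t, dist p x ∂μ ≤ ∫ x in ball p d, dist p x ∂μ := by
    refine setIntegral_mono_set hint ?_ (HasSubset.Subset.eventuallyLE hsub1)
    exact Filter.Eventually.of_forall fun x => dist_nonneg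
  -- step 2 : ∫_{B_q t} dist p x ≥ ∫_{B_q t} ((d-t) - dist q x)
  have step2 : ∫ x in ball q t, ((d - t) - dist q x) ∂μ ≤ ∫ x in ball q t, dist p x ∂μ := by
    refine setIntegral_mono_on ((integrableOn_const (hfin q t).ne).sub hintq2)
      hintq measurableSet_ball ?_
    intro x hx
    have h := dist_triangle p x q
    rw [dist_comm x q] at h
    rw [hq] at *
    linarith [dist_triangle p x q, (by rw [dist_comm] : dist x q = dist q x)]
  -- step 3 : value of the LHS
  have step3 : ∫ x in ball q t, ((d - t) - dist q x) ∂μ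
      = (d - t) * A - ∫ x in ball q t, dist q x ∂μ := by
    rw [integral_sub (integrableOn_const (hfin q t).ne : IntegrableOn (fun _ => d - t) (ball q t) μ) hintq2,
      setIntegral_const]
    simp [hAdef, mul_comm, Measure.real]
  -- step 4 : ∫ dist q x < t * A
  have step4 : ∫ x in ball q t, dist q x ∂μ < t * A := by
    have hpos' : 0 < ∫ x in ball q t, (t - dist q x) ∂μ := by
      rw [setIntegral_pos_iff_support_of_nonneg_ae]
      · refine lt_of_lt_of_le (hpos q t ht0) (measure_mono ?_)
        intro x hx
        refine ⟨?_, hx⟩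
        rw [mem_ball'] at hx
        simp only [Function.mem_support]
        intro h; linarith [hx, h]
      · filter_upwards [ae_restrict_mem measurableSet_ball] with x hx
        rw [mem_ball'] at hx; simp; linarith
      · exact (integrableOn_const (hfin q t).ne).sub hintq2
    have heq : ∫ x in ball q t, (t - dist q x) ∂μ
        = t * A - ∫ x in ball q t, dist q x ∂μ := by
      rw [integral_sub (integrableOn_const (hfin q t).ne : IntegrableOn (fun _ => t) (ball q t) μ) hintq2,
        setIntegral_const]
      simp [hAdef, mul_comm, Measure.real]
    linarith [heq ▸ hpos']
  -- combine : ∫_{B_p d} > (d - 2t) * A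
  have hmain : (d - 2 * t) * A < ∫ x in ball p d, dist p x ∂μ := by
    have : (d - 2 * t) * A = (d - t) * A - t * A := by ring
    linarith
  -- algebra : c(n) * d * B ≤ (d - 2t) * A
  refine lt_of_le_of_lt ?_ hmain
  have h2dt : 0 < 2 * d - t := by linarith
  have hco : α * ((n:ℝ) + 2 + 2 * s) = (n:ℝ) * (2 - α) := by
    simp only [hαdef]
    linear_combination (-2 : ℝ) * hs2
  have hratio : t / (2 * d - t) = (n:ℝ) / ((n:ℝ) + 2 + 2 * s) := by
    rw [div_eq_div_iff (by positivity) (by positivity)]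
    simp only [htdef]
    linear_combination d * hco
  have hc1 : 3 / (2 * s + 2 * (n:ℝ) + 1) = 2 * s - 2 * n - 1 := by
    rw [div_eq_iff (by positivity)]
    linear_combination (-4 : ℝ) * hs2
  have hd2t : d - 2 * t = (2 * s - 2 * (n:ℝ) - 1) * d := by
    simp only [htdef, hαdef]; ring
  have hpow : ((n:ℝ) / ((n:ℝ) + 2 + 2 * s)) ^ n * B ≤ A := by
    rw [← hratio, div_pow, div_mul_eq_mul_div, div_le_iff₀ (by positivity)]
    calc t ^ n * B = B * t ^ n := by ring
      _ ≤ A * (2 * d - t) ^ n := hkey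
  calc 3 / (2 * s + 2 * (n:ℝ) + 1) * ((n:ℝ) / ((n:ℝ) + 2 + 2 * s)) ^ n * d * B
      = (d - 2 * t) * (((n:ℝ) / ((n:ℝ) + 2 + 2 * s)) ^ n * B) := by
        rw [hc1, hd2t]; ring
    _ ≤ (d - 2 * t) * A := by
        refine mul_le_mul_of_nonneg_left hpow (by linarith)
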